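/- Let I = I_{g,(m_1,…,m_n)} ⊆ R and let 𝔪 be the graded maximal ideal of R (the ideal generated by all the variables x_{j,k} and y_A). Let T = (t_{j,k}) be the g×n matrix with t_{j,k} = d_k − 1 for all 1 ≤ j ≤ g, 1 ≤ k ≤ n, and set S = X^T = Π_{j,k} x_{j,k}^{d_k − 1}. Then S ∉ I and S·𝔪 ⊆ I; that is, S ∈ (I : 𝔪) \ I, so the image of S in R/I is a nonzero socle element and depth(R/I) = 0. -/

import Mathlib

open MvPolynomial Finset

noncomputable section

namespace Paper

open scoped Classical

variable (K : Type) [Field K] (g n : ℕ) (m : Fin n → ℕ)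

/-- `d k = m_k + m_{k+1} + ⋯ + m_n + 1` (with `k` zero-indexed). -/
def dd (k : Fin n) : ℕ := (∑ k' ∈ Finset.Ici k, m k') + 1

/-- `M k`: equals `m k` for the last index and `m k - 1` otherwise. -/
def MM (k : Fin n) : ℕ := if k.val = n - 1 then m k else m k - 1

/-- The membership predicate for the set `𝒜_k` (for `0 ≤ k ≤ n`):
columns (zero-indexed) `< k` have entries bounded by `M` and column sum `m`,
and all later columns vanish. -/
def mem𝒜 (k : ℕ) (A : Fin g → Fin n → ℕ) : Prop :=
  ∀ k' : Fin n,
    (k'.val < k → (∀ j, A j k' ≤ MM n m k') ∧ (∑ j, A j k' = m k')) ∧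
    (k ≤ k'.val → ∀ j, A j k' = 0)

/-- The (finite) set `𝒜_k` of admissible `g × n` matrices. -/
def 𝒜 (k : ℕ) : Finset (Fin g → Fin n → ℕ) :=
  (Fintype.piFinset fun _ : Fin g => Fintype.piFinset fun k' : Fin n =>
      Finset.range (m k' + 1)).filter (mem𝒜 g n m k)

/-- The variables of the ring `R`: the `x_{j,k}` and one `y_A` for each `A ∈ 𝒜_n`. -/
def Var : Type := (Fin g × Fin n) ⊕ {A : Fin g → Fin n → ℕ // A ∈ 𝒜 g n m n}

/-- The variable `x_{j,k}`. -/
def xv (j : Fin g) (k : Fin n) : MvPolynomial (Var g n m) K := X (Sum.inl (j, k))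

/-- The variable `y_A` for `A ∈ 𝒜_n`. -/
def yv (B : {A : Fin g → Fin n → ℕ // A ∈ 𝒜 g n m n}) : MvPolynomial (Var g n m) K :=
  X (Sum.inr B)

/-- The monomial `X^A = ∏_{j,k} x_{j,k}^{A j k}`. -/
def Xpow (A : Fin g → Fin n → ℕ) : MvPolynomial (Var g n m) K :=
  ∏ j : Fin g, ∏ k : Fin n, xv K g n m j k ^ A j k

/-- The polynomial `f`. -/
def ff : MvPolynomial (Var g n m) K :=
  (∑ k : Fin (n - 1), ∑ A ∈ 𝒜 g n m k.val, ∑ j : Fin g,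
      Xpow K g n m A
        * xv K g n m j ⟨k.val, by have := k.isLt; omega⟩ ^ m ⟨k.val, by have := k.isLt; omega⟩
        * xv K g n m j ⟨k.val + 1, by have := k.isLt; omega⟩ ^
            dd n m ⟨k.val + 1, by have := k.isLt; omega⟩)
  + ∑ B : {A : Fin g → Fin n → ℕ // A ∈ 𝒜 g n m n},
      Xpow K g n m B.1 * yv K g n m B

/-- The ideal `I_{g,(m_1,…,m_n)} = (x_{1,1}^d, …, x_{g,1}^d, f)`. -/
def paperIdeal (hn : 0 < n) : Ideal (MvPolynomial (Var g n m) K) :=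
  Ideal.span
    ((Set.range fun j : Fin g => xv K g n m j ⟨0, hn⟩ ^ dd n m ⟨0, hn⟩) ∪ {ff K g n m})


/-- The socle witness `S = X^T` where `T` is the `g × n` matrix with `t_{j,k} = d_k - 1`. -/
def SS : MvPolynomial (Var g n m) K := Xpow K g n m fun _ k => dd n m k - 1

/- ====== basic facts ====== -/

lemma dd_ge (k : Fin n) : m k + 1 ≤ dd n m k := by
  have : m k ≤ ∑ k' ∈ Finset.Ici k, m k' :=
    Finset.single_le_sum (f := fun k' => m k') (fun _ _ => Nat.zero_le _)
      (Finset.mem_Ici.mpr le_rfl)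
  unfold dd; omega

lemma Xpow_add (A B : Fin g → Fin n → ℕ) :
    Xpow K g n m (fun j k => A j k + B j k) = Xpow K g n m A * Xpow K g n m B := by
  unfold Xpow
  rw [← Finset.prod_mul_distrib]
  refine Finset.prod_congr rfl fun j _ => ?_
  rw [← Finset.prod_mul_distrib]
  exact Finset.prod_congr rfl fun k _ => pow_add _ _ _

lemma Xpow_congr {A B : Fin g → Fin n → ℕ} (h : ∀ j k, A j k = B j k) :
    Xpow K g n m A = Xpow K g n m B := by
  have : A = B := funext fun j => funext fun k => h j k
  rw [this]

lemma Xpow_single (j₀ : Fin g) (k₀ : Fin n) (a : ℕ) :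
    Xpow K g n m (fun j k => if j = j₀ then (if k = k₀ then a else 0) else 0)
      = xv K g n m j₀ k₀ ^ a := by
  unfold Xpow
  rw [Finset.prod_eq_single j₀]
  · rw [Finset.prod_eq_single k₀]
    · simp
    · intro k _ hk; simp [hk]
    · simp
  · intro j _ hj
    refine Finset.prod_eq_one fun k _ => ?_
    simp [hj]
  · simp

lemma Xpow_mono_mem {I : Ideal (MvPolynomial (Var g n m) K)} {B E : Fin g → Fin n → ℕ}
    (hB : Xpow K g n m B ∈ I) (h : ∀ j k, B j k ≤ E j k) : Xpow K g n m E ∈ I := by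
  have e : Xpow K g n m E = Xpow K g n m (fun j k => E j k - B j k) * Xpow K g n m B := by
    rw [← Xpow_add]
    exact Xpow_congr K g n m fun j k => by have := h j k; omega
  rw [e]
  exact Ideal.mul_mem_left _ _ hB

/- ====== facts about 𝒜 ====== -/

lemma A_bound {k : ℕ} {C : Fin g → Fin n → ℕ} (hC : C ∈ 𝒜 g n m k) {c : Fin n}
    (hc : c.val < k) (j : Fin g) : C j c ≤ MM n m c :=
  (((Finset.mem_filter.mp hC).2 c).1 hc).1 j

lemma A_sum {k : ℕ} {C : Fin g → Fin n → ℕ} (hC : C ∈ 𝒜 g n m k) {c : Fin n}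
    (hc : c.val < k) : ∑ j, C j c = m c :=
  (((Finset.mem_filter.mp hC).2 c).1 hc).2

lemma A_zero {k : ℕ} {C : Fin g → Fin n → ℕ} (hC : C ∈ 𝒜 g n m k) {c : Fin n}
    (hc : k ≤ c.val) (j : Fin g) : C j c = 0 :=
  ((Finset.mem_filter.mp hC).2 c).2 hc j

lemma MM_le (c : Fin n) : MM n m c ≤ m c := by
  unfold MM; split_ifs <;> omega

lemma MM_eq {c : Fin n} (hc : c.val ≠ n - 1) : MM n m c = m c - 1 := by
  unfold MM; rw [if_neg hc]

/- ====== the partial socle monomials ====== -/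

def SXexp (k : ℕ) (j : Fin g) : Fin g → Fin n → ℕ := fun j' c =>
  if c.val < k then dd n m c - 1
  else if c.val = k then (if j' = j then dd n m c else 0) else 0


/- ====== the classification lemma ====== -/

lemma classify (hn : 0 < n) (kk : ℕ) (P E : Fin g → Fin n → ℕ)
    (hP : ∀ j (c : Fin n), c.val < kk → P j c + 1 ≤ dd n m c)
    (hL : ∀ k' : ℕ, k' < kk → ∀ j',
      Xpow K g n m (SXexp g n m k' j') ∈ paperIdeal K g n m hn)
    (hne : ∃ c : Fin n, c.val < kk ∧ ∃ j, E j c ≠ P j c)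
    (hsum : ∀ c : Fin n, c.val < kk →
      (∀ c' : Fin n, c'.val < c.val → ∀ j, E j c' = P j c') →
      (∃ j, E j c ≠ P j c) → ∑ j, P j c ≤ ∑ j, E j c) :
    Xpow K g n m (fun j c => (if c.val < kk then dd n m c - 1 - P j c else 0) + E j c)
      ∈ paperIdeal K g n m hn := by
  classical
  set s : Finset (Fin n) :=
    Finset.univ.filter (fun c => c.val < kk ∧ ∃ j, E j c ≠ P j c) with hs
  obtain ⟨c₀, hc₀kk, hc₀ne⟩ := hne
  have hsne : s.Nonempty := ⟨c₀, by simp [hs, hc₀kk, hc₀ne]⟩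
  set cm : Fin n := s.min' hsne with hcm
  have hcmem : cm ∈ s := Finset.min'_mem _ _
  rw [hs, Finset.mem_filter] at hcmem
  obtain ⟨-, hckk, hcdiff⟩ := hcmem
  have hpre : ∀ c' : Fin n, c'.val < cm.val → ∀ j, E j c' = P j c' := by
    intro c' hlt j
    by_contra hne'
    have hc's : c' ∈ s := by
      rw [hs, Finset.mem_filter]
      exact ⟨Finset.mem_univ _, by omega, j, hne'⟩
    have := Finset.min'_le s c' hc's
    rw [← hcm] at this
    have : cm.val ≤ c'.val := this
    omega
  have hsum' := hsum cm hckk hpre hcdiff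
  have hjex : ∃ j, P j cm < E j cm := by
    by_contra hcon
    push_neg at hcon
    have hle : ∀ j ∈ Finset.univ, E j cm ≤ P j cm := fun j _ => hcon j
    have hEP : ∑ j, E j cm = ∑ j, P j cm :=
      le_antisymm (Finset.sum_le_sum hle) hsum'
    obtain ⟨j, hj⟩ := hcdiff
    exact hj ((Finset.sum_eq_sum_iff_of_le hle).mp hEP j (Finset.mem_univ j))
  obtain ⟨js, hjs⟩ := hjex
  refine Xpow_mono_mem K g n m (hL cm.val hckk js) ?_
  intro j c
  unfold SXexp
  by_cases h1 : c.val < cm.val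
  · rw [if_pos h1, if_pos (by omega : c.val < kk), hpre c h1 j]
    have := hP j c (by omega)
    omega
  · rw [if_neg h1]
    by_cases h2 : c.val = cm.val
    · rw [if_pos h2]
      have hc : c = cm := Fin.ext h2
      by_cases h3 : j = js
      · subst h3
        rw [if_pos rfl, hc, if_pos hckk]
        have := hP j cm hckk
        omega
      · rw [if_neg h3]; exact Nat.zero_le _
    · rw [if_neg h2]; exact Nat.zero_le _

/- ====== the terms of f ====== -/

def Et (kv : ℕ) (C : Fin g → Fin n → ℕ) (j'' : Fin g) : Fin g → Fin n → ℕ := fun j c =>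
  C j c + (if j = j'' then (if c.val = kv then m c else 0) else 0)
    + (if j = j'' then (if c.val = kv + 1 then dd n m c else 0) else 0)

lemma Xpow_single' (j₀ : Fin g) (kv : ℕ) (hkv : kv < n) (a : Fin n → ℕ) :
    Xpow K g n m (fun j c => if j = j₀ then (if c.val = kv then a c else 0) else 0)
      = xv K g n m j₀ ⟨kv, hkv⟩ ^ a ⟨kv, hkv⟩ := by
  unfold Xpow
  rw [Finset.prod_eq_single j₀]
  · rw [Finset.prod_eq_single (⟨kv, hkv⟩ : Fin n)]
    · simp
    · intro c _ hc
      have : c.val ≠ kv := fun h => hc (Fin.ext h)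
      simp [this]
    · simp
  · intro j _ hj
    exact Finset.prod_eq_one fun c _ => by simp [hj]
  · simp

lemma term_eq (kv : ℕ) (hkv : kv + 1 < n) (C : Fin g → Fin n → ℕ) (j'' : Fin g) :
    Xpow K g n m (Et g n m kv C j'') =
      Xpow K g n m C * xv K g n m j'' ⟨kv, by omega⟩ ^ m ⟨kv, by omega⟩
        * xv K g n m j'' ⟨kv + 1, hkv⟩ ^ dd n m ⟨kv + 1, hkv⟩ := by
  have e1 : Xpow K g n m (Et g n m kv C j'') =
      Xpow K g n m
          (fun j c => C j c + (if j = j'' then (if c.val = kv then m c else 0) else 0))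
        * Xpow K g n m
            (fun j c => if j = j'' then (if c.val = kv + 1 then dd n m c else 0) else 0) :=
    Xpow_add K g n m _ _
  have e2 : Xpow K g n m
        (fun j c => C j c + (if j = j'' then (if c.val = kv then m c else 0) else 0))
      = Xpow K g n m C
        * Xpow K g n m (fun j c => if j = j'' then (if c.val = kv then m c else 0) else 0) :=
    Xpow_add K g n m _ _
  rw [e1, e2, Xpow_single' K g n m j'' kv (by omega) m,
    Xpow_single' K g n m j'' (kv + 1) hkv (dd n m)]

/- ====== multiplier and products ====== -/

def Wmul (kk : ℕ) (P : Fin g → Fin n → ℕ) : MvPolynomial (Var g n m) K :=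
  Xpow K g n m (fun j c => if c.val < kk then dd n m c - 1 - P j c else 0)

def Wterm (kk : ℕ) (P E : Fin g → Fin n → ℕ) : MvPolynomial (Var g n m) K :=
  Xpow K g n m (fun j c => (if c.val < kk then dd n m c - 1 - P j c else 0) + E j c)

lemma Wterm_eq (kk : ℕ) (P E : Fin g → Fin n → ℕ) :
    Wterm K g n m kk P E = Wmul K g n m kk P * Xpow K g n m E :=
  Xpow_add K g n m _ _

def SIdx : Finset (Σ _ : Fin (n - 1), (Fin g → Fin n → ℕ) × Fin g) :=
  Finset.univ.sigma fun kf => (𝒜 g n m kf.val) ×ˢ (Finset.univ : Finset (Fin g))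

lemma expandW (kk : ℕ) (P : Fin g → Fin n → ℕ) :
    Wmul K g n m kk P * ff K g n m
      = (∑ p ∈ SIdx g n m, Wterm K g n m kk P (Et g n m p.1.val p.2.1 p.2.2))
        + ∑ B : {A : Fin g → Fin n → ℕ // A ∈ 𝒜 g n m n},
            Wterm K g n m kk P B.1 * yv K g n m B := by
  unfold ff
  rw [mul_add]
  congr 1
  · calc Wmul K g n m kk P * (∑ k : Fin (n - 1), ∑ A ∈ 𝒜 g n m k.val, ∑ j : Fin g,
          Xpow K g n m A
            * xv K g n m j ⟨k.val, by have := k.isLt; omega⟩ ^ m ⟨k.val, by have := k.isLt; omega⟩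
            * xv K g n m j ⟨k.val + 1, by have := k.isLt; omega⟩ ^
                dd n m ⟨k.val + 1, by have := k.isLt; omega⟩)
        = ∑ kf : Fin (n - 1), ∑ C ∈ 𝒜 g n m kf.val, ∑ j'' : Fin g,
            Wterm K g n m kk P (Et g n m kf.val C j'') := by
          rw [Finset.mul_sum]
          refine Finset.sum_congr rfl fun kf _ => ?_
          rw [Finset.mul_sum]
          refine Finset.sum_congr rfl fun C _ => ?_
          rw [Finset.mul_sum]
          refine Finset.sum_congr rfl fun j'' _ => ?_
          rw [Wterm_eq, term_eq K g n m kf.val (by have := kf.isLt; omega) C j'']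
      _ = ∑ p ∈ SIdx g n m, Wterm K g n m kk P (Et g n m p.1.val p.2.1 p.2.2) := by
          unfold SIdx
          rw [Finset.sum_sigma]
          exact Finset.sum_congr rfl fun kf _ =>
            (Finset.sum_product (s := 𝒜 g n m kf.val) (t := Finset.univ)
              (f := fun p => Wterm K g n m kk P (Et g n m kf.val p.1 p.2))).symm
  · rw [Finset.mul_sum]
    refine Finset.sum_congr rfl fun B _ => ?_
    rw [Wterm_eq, mul_assoc]

lemma Et_colsum (kv : ℕ) (C : Fin g → Fin n → ℕ) (j'' : Fin g) (c : Fin n) :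
    ∑ j, Et g n m kv C j'' j c
      = (∑ j, C j c) + (if c.val = kv then m c else 0)
        + (if c.val = kv + 1 then dd n m c else 0) := by
  unfold Et
  rw [Finset.sum_add_distrib, Finset.sum_add_distrib]
  congr 1
  · congr 1
    rw [Finset.sum_ite_eq' Finset.univ j'' (fun _ => if c.val = kv then m c else 0)]
    simp
  · rw [Finset.sum_ite_eq' Finset.univ j''
      (fun _ => if c.val = kv + 1 then dd n m c else 0)]
    simp

lemma xterm_mem (hn : 0 < n) (kk : ℕ) (P : Fin g → Fin n → ℕ)
    (hP : ∀ j (c : Fin n), c.val < kk → P j c + 1 ≤ dd n m c)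
    (hPsum : ∀ c : Fin n, c.val < kk → ∑ j, P j c = m c)
    (hL : ∀ k' : ℕ, k' < kk → ∀ j',
      Xpow K g n m (SXexp g n m k' j') ∈ paperIdeal K g n m hn)
    (kf : Fin (n - 1)) (C : Fin g → Fin n → ℕ) (hC : C ∈ 𝒜 g n m kf.val) (j'' : Fin g)
    (hne : ∃ c : Fin n, c.val < kk ∧ ∃ j, Et g n m kf.val C j'' j c ≠ P j c) :
    Wterm K g n m kk P (Et g n m kf.val C j'') ∈ paperIdeal K g n m hn := by
  have hkfn : kf.val + 1 < n := by have := kf.isLt; omega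
  refine classify K g n m hn kk P _ hP hL hne ?_
  intro c hckk hpre hdiff
  rw [hPsum c hckk]
  rcases Nat.lt_trichotomy c.val kf.val with hlt | heq | hgt
  · rw [Et_colsum, A_sum g n m hC hlt, if_neg (by omega), if_neg (by omega)]
    omega
  · rw [Et_colsum, if_pos heq, if_neg (by omega)]
    have h0 : ∑ j, C j c = 0 :=
      Finset.sum_eq_zero fun j _ => A_zero g n m hC (by omega) j
    omega
  · by_cases heq2 : c.val = kf.val + 1
    · rw [Et_colsum, if_neg (by omega), if_pos heq2]
      have h0 : ∑ j, C j c = 0 :=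
        Finset.sum_eq_zero fun j _ => A_zero g n m hC (by omega) j
      have := dd_ge n m c
      omega
    · exfalso
      have hp := hpre ⟨kf.val + 1, hkfn⟩ (by omega : kf.val + 1 < c.val)
      have hEsum : ∑ j, Et g n m kf.val C j'' j ⟨kf.val + 1, hkfn⟩
          = ∑ j, P j ⟨kf.val + 1, hkfn⟩ :=
        Finset.sum_congr rfl fun j _ => hp j
      rw [Et_colsum, if_neg (by omega : ¬(kf.val + 1 = kf.val)),
        if_pos (rfl : kf.val + 1 = kf.val + 1)] at hEsum
      have h0 : ∑ j, C j (⟨kf.val + 1, hkfn⟩ : Fin n) = 0 :=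
        Finset.sum_eq_zero fun j _ =>
          A_zero g n m hC (by omega : kf.val ≤ kf.val + 1) j
      have h1 := hPsum ⟨kf.val + 1, hkfn⟩ (by omega : kf.val + 1 < kk)
      have := dd_ge n m ⟨kf.val + 1, hkfn⟩
      omega

lemma yterm_mem (hn : 0 < n) (kk : ℕ) (P : Fin g → Fin n → ℕ)
    (hP : ∀ j (c : Fin n), c.val < kk → P j c + 1 ≤ dd n m c)
    (hPsum : ∀ c : Fin n, c.val < kk → ∑ j, P j c = m c)
    (hL : ∀ k' : ℕ, k' < kk → ∀ j',
      Xpow K g n m (SXexp g n m k' j') ∈ paperIdeal K g n m hn)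
    (B : {A : Fin g → Fin n → ℕ // A ∈ 𝒜 g n m n})
    (hne : ∃ c : Fin n, c.val < kk ∧ ∃ j, B.1 j c ≠ P j c) :
    Wterm K g n m kk P B.1 * yv K g n m B ∈ paperIdeal K g n m hn := by
  refine Ideal.mul_mem_right _ _ (classify K g n m hn kk P _ hP hL hne ?_)
  intro c hckk _ _
  rw [hPsum c hckk, A_sum g n m B.2 c.isLt]

/- ====== the canonical matrix Astar ====== -/

def Astar (k : ℕ) : Fin g → Fin n → ℕ := fun j c =>
  if c.val < k then (if j.val = 0 then m c - 1 else if j.val = 1 then 1 else 0) else 0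

lemma Astar_sum (hg : 2 ≤ g) {k : ℕ} {c : Fin n} (hc : c.val < k) (hm : 1 ≤ m c) :
    ∑ j, Astar g n m k j c = m c := by
  have hrw : ∀ j : Fin g, Astar g n m k j c
      = (if j = (⟨0, by omega⟩ : Fin g) then m c - 1 else 0)
        + (if j = (⟨1, by omega⟩ : Fin g) then 1 else 0) := by
    intro j
    unfold Astar
    rw [if_pos hc]
    simp only [Fin.ext_iff]
    split_ifs <;> simp_all <;> omega
  rw [Finset.sum_congr rfl fun j _ => hrw j, Finset.sum_add_distrib,
    Finset.sum_ite_eq' Finset.univ _ (fun _ => m c - 1),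
    Finset.sum_ite_eq' Finset.univ _ (fun _ => 1)]
  simp only [Finset.mem_univ, if_pos]
  omega

lemma Astar_mem (hg : 2 ≤ g) {k : ℕ} (hm2 : ∀ c : Fin n, c.val < k → 2 ≤ m c) :
    Astar g n m k ∈ 𝒜 g n m k := by
  rw [𝒜, Finset.mem_filter]
  constructor
  · rw [Fintype.mem_piFinset]
    intro j
    rw [Fintype.mem_piFinset]
    intro c
    rw [Finset.mem_range]
    unfold Astar
    by_cases h1 : c.val < k
    · have := hm2 c h1
      rw [if_pos h1]
      split_ifs <;> omega
    · rw [if_neg h1]; omega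
  · intro c
    constructor
    · intro hck
      have hm := hm2 c hck
      constructor
      · intro j
        have hMM : m c - 1 ≤ MM n m c := by unfold MM; split_ifs <;> omega
        unfold Astar
        rw [if_pos hck]
        split_ifs <;> omega
      · exact Astar_sum g n m hg hck (by omega)
    · intro hck j
      unfold Astar
      rw [if_neg (by omega)]

/- ====== the main induction ====== -/

lemma lemL (hg : 2 ≤ g) (hn : 0 < n)
    (hm2 : ∀ i : Fin n, i.val + 2 < n → 2 ≤ m i)
    (hm1 : ∀ i : Fin n, i.val + 2 = n → 1 ≤ m i) :
    ∀ k : ℕ, k < n → ∀ j : Fin g,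
      Xpow K g n m (SXexp g n m k j) ∈ paperIdeal K g n m hn := by
  intro k
  induction k using Nat.strong_induction_on with
  | _ k IH =>
  rcases k with _ | k
  · -- base case k = 0
    intro _ j
    have he : ∀ (j' : Fin g) (c : Fin n), SXexp g n m 0 j j' c
        = (if j' = j then (if c.val = 0 then dd n m c else 0) else 0) := by
      intro j' c
      unfold SXexp
      rw [if_neg (by omega)]
      by_cases h1 : c.val = 0 <;> by_cases h2 : j' = j <;> simp [h1, h2]
    rw [Xpow_congr K g n m he, Xpow_single' K g n m j 0 hn (dd n m)]
    exact Ideal.subset_span (Set.mem_union_left _ ⟨j, rfl⟩)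
  · -- inductive step: prove for k + 1
    intro hk1 j
    have hkn : k < n := by omega
    have hkn1 : k < n - 1 := by omega
    set P : Fin g → Fin n → ℕ := fun j' c =>
      if c.val < k then Astar g n m k j' c
      else if c.val = k then (if j' = j then m c else 0) else 0 with hPdef
    have hmc2 : ∀ c : Fin n, c.val < k → 2 ≤ m c := fun c hc => hm2 c (by omega)
    have hmk : 1 ≤ m (⟨k, hkn⟩ : Fin n) := by
      rcases Nat.lt_or_ge (k + 2) n with h | h
      · exact le_trans (by omega) (hm2 ⟨k, hkn⟩ h)
      · exact hm1 ⟨k, hkn⟩ (show k + 2 = n by omega)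
    have hmk' : ∀ c : Fin n, c.val = k → 1 ≤ m c := by
      intro c hc
      have hce : c = ⟨k, hkn⟩ := Fin.ext hc
      rw [hce]; exact hmk
    have hPle : ∀ (j' : Fin g) (c : Fin n), c.val < k + 1 → P j' c + 1 ≤ dd n m c := by
      intro j' c hc
      have hdd := dd_ge n m c
      simp only [hPdef]
      by_cases h1 : c.val < k
      · have := hmc2 c h1
        rw [if_pos h1]
        unfold Astar
        rw [if_pos h1]
        split_ifs <;> omega
      · rw [if_neg h1, if_pos (by omega : c.val = k)]
        split_ifs <;> omega
    have hPsum : ∀ c : Fin n, c.val < k + 1 → ∑ j', P j' c = m c := by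
      intro c hc
      simp only [hPdef]
      by_cases h1 : c.val < k
      · simp only [if_pos h1]
        exact Astar_sum g n m hg h1 (by have := hmc2 c h1; omega)
      · simp only [if_neg h1, if_pos (by omega : c.val = k)]
        rw [Finset.sum_ite_eq' Finset.univ j (fun _ => m c)]
        simp
    have hL' : ∀ k' : ℕ, k' < k + 1 → ∀ j',
        Xpow K g n m (SXexp g n m k' j') ∈ paperIdeal K g n m hn :=
      fun k' hk' j' => IH k' hk' (by omega) j'
    have hAmem : Astar g n m k ∈ 𝒜 g n m k := Astar_mem g n m hg hmc2
    have hff : ff K g n m ∈ paperIdeal K g n m hn :=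
      Ideal.subset_span (Set.mem_union_right _ rfl)
    have hwff : Wmul K g n m (k + 1) P * ff K g n m ∈ paperIdeal K g n m hn :=
      Ideal.mul_mem_left _ _ hff
    set p₀ : Σ _ : Fin (n - 1), (Fin g → Fin n → ℕ) × Fin g :=
      ⟨⟨k, hkn1⟩, (Astar g n m k, j)⟩ with hp₀
    have hp₀mem : p₀ ∈ SIdx g n m := by
      rw [hp₀, SIdx, Finset.mem_sigma]
      exact ⟨Finset.mem_univ _, Finset.mem_product.mpr ⟨hAmem, Finset.mem_univ _⟩⟩
    -- all non-target x-terms are in the ideal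
    have hother : ∀ p ∈ (SIdx g n m).erase p₀,
        Wterm K g n m (k + 1) P (Et g n m p.1.val p.2.1 p.2.2)
          ∈ paperIdeal K g n m hn := by
      intro p hp
      obtain ⟨kf, C, j''⟩ := p
      rw [Finset.mem_erase] at hp
      obtain ⟨hpne, hpmem⟩ := hp
      rw [SIdx, Finset.mem_sigma] at hpmem
      have hC : C ∈ 𝒜 g n m kf.val := (Finset.mem_product.mp hpmem.2).1
      refine xterm_mem K g n m hn (k + 1) P hPle hPsum hL' kf C hC j'' ?_
      rcases Nat.lt_trichotomy kf.val k with hlt | heq | hgt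
      · -- kf < k : the forced difference is at column kf+1
        have hkfn : kf.val + 1 < n := by omega
        refine ⟨⟨kf.val + 1, hkfn⟩, (show kf.val + 1 < k + 1 by omega), ?_⟩
        by_contra hcon
        push_neg at hcon
        have hEsum : ∑ j', Et g n m kf.val C j'' j' ⟨kf.val + 1, hkfn⟩
            = ∑ j', P j' ⟨kf.val + 1, hkfn⟩ :=
          Finset.sum_congr rfl fun j' _ => hcon j'
        rw [Et_colsum, if_neg (show ¬(kf.val + 1 = kf.val) by omega),
          if_pos (show kf.val + 1 = kf.val + 1 from rfl)] at hEsum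
        have h0 : ∑ j', C j' (⟨kf.val + 1, hkfn⟩ : Fin n) = 0 :=
          Finset.sum_eq_zero fun j' _ =>
            A_zero g n m hC (show kf.val ≤ kf.val + 1 by omega) j'
        have h1 := hPsum ⟨kf.val + 1, hkfn⟩ (show kf.val + 1 < k + 1 by omega)
        have := dd_ge n m ⟨kf.val + 1, hkfn⟩
        omega
      · -- kf = k
        by_cases hCA : C = Astar g n m k
        · -- then j'' ≠ j
          have hjj : j'' ≠ j := by
            intro hjeq
            apply hpne
            have hkf : kf = (⟨k, hkn1⟩ : Fin (n - 1)) := Fin.ext heq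
            rw [hCA, hjeq, hkf, hp₀]
          refine ⟨⟨k, hkn⟩, (show k < k + 1 by omega), j, ?_⟩
          have e0 : C j (⟨k, hkn⟩ : Fin n) = 0 := by
            rw [hCA]; unfold Astar; rw [if_neg (show ¬(k < k) by omega)]
          have hjv : ¬(j = j'') := fun h => hjj h.symm
          have h1 := hmk
          unfold Et
          rw [e0]
          simp only [hPdef]
          split_ifs <;> first | omega | exact absurd ‹j = j''› hjv | simp_all
        · -- C differs from Astar somewhere in a column < k
          have hex : ∃ j' c, C j' c ≠ Astar g n m k j' c := by
            by_contra hcon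
            push_neg at hcon
            exact hCA (funext fun j' => funext fun c => hcon j' c)
          obtain ⟨j', c, hne'⟩ := hex
          have hcval : c.val < k := by
            by_contra hge
            refine hne' ?_
            rw [A_zero g n m hC (show kf.val ≤ c.val by omega) j']
            unfold Astar
            rw [if_neg (by omega)]
          refine ⟨c, (by omega : c.val < k + 1), j', ?_⟩
          unfold Et
          simp only [hPdef]
          split_ifs <;> first | omega | simp_all
      · -- kf > k : difference at column k
        refine ⟨⟨k, hkn⟩, (show k < k + 1 by omega), j, ?_⟩
        have hb := A_bound g n m (C := C) hC (c := ⟨k, hkn⟩) (show k < kf.val from hgt) j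
        rw [MM_eq n m (c := ⟨k, hkn⟩) (show k ≠ n - 1 by omega)] at hb
        have h1 := hmk
        unfold Et
        simp only [hPdef]
        split_ifs <;> first | omega | simp_all
    -- y-terms are all in the ideal
    have hY : (∑ B : {A : Fin g → Fin n → ℕ // A ∈ 𝒜 g n m n},
        Wterm K g n m (k + 1) P B.1 * yv K g n m B) ∈ paperIdeal K g n m hn := by
      refine Ideal.sum_mem _ fun B _ => ?_
      refine yterm_mem K g n m hn (k + 1) P hPle hPsum hL' B ?_
      refine ⟨⟨k, hkn⟩, (show k < k + 1 by omega), j, ?_⟩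
      have hb := A_bound g n m (C := B.1) B.2 (c := ⟨k, hkn⟩) (show k < n from hkn) j
      rw [MM_eq n m (c := ⟨k, hkn⟩) (show k ≠ n - 1 by omega)] at hb
      have h1 := hmk
      simp only [hPdef]
      split_ifs <;> first | omega | simp_all
    have hsplit : (∑ p ∈ SIdx g n m,
          Wterm K g n m (k + 1) P (Et g n m p.1.val p.2.1 p.2.2))
        = Wterm K g n m (k + 1) P (Et g n m k (Astar g n m k) j)
          + ∑ p ∈ (SIdx g n m).erase p₀,
              Wterm K g n m (k + 1) P (Et g n m p.1.val p.2.1 p.2.2) :=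
      (Finset.add_sum_erase _ _ hp₀mem).symm
    have hrest : (∑ p ∈ (SIdx g n m).erase p₀,
        Wterm K g n m (k + 1) P (Et g n m p.1.val p.2.1 p.2.2))
          ∈ paperIdeal K g n m hn :=
      Ideal.sum_mem _ hother
    have htarget : Wterm K g n m (k + 1) P (Et g n m k (Astar g n m k) j)
        = Xpow K g n m (SXexp g n m (k + 1) j) := by
      refine Xpow_congr K g n m ?_
      intro j' c
      simp only [hPdef]
      unfold Et SXexp Astar
      have hdd := dd_ge n m c
      by_cases hc1 : c.val < k
      · have h2 := hmc2 c hc1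
        split_ifs <;> omega
      · by_cases hc2 : c.val = k
        · have h1 := hmk' c hc2
          split_ifs <;> omega
        · split_ifs <;> omega
    have heq2 : Xpow K g n m (SXexp g n m (k + 1) j)
        = Wmul K g n m (k + 1) P * ff K g n m
          - (∑ p ∈ (SIdx g n m).erase p₀,
              Wterm K g n m (k + 1) P (Et g n m p.1.val p.2.1 p.2.2))
          - (∑ B : {A : Fin g → Fin n → ℕ // A ∈ 𝒜 g n m n},
              Wterm K g n m (k + 1) P B.1 * yv K g n m B) := by
      rw [expandW K g n m (k + 1) P, hsplit, htarget]
      ring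
    rw [heq2]
    exact Ideal.sub_mem _ (Ideal.sub_mem _ hwff hrest) hY

/- ====== S times each variable lies in I ====== -/

lemma SmulX (hg : 2 ≤ g) (hn : 0 < n)
    (hm2 : ∀ i : Fin n, i.val + 2 < n → 2 ≤ m i)
    (hm1 : ∀ i : Fin n, i.val + 2 = n → 1 ≤ m i) (j : Fin g) (c : Fin n) :
    SS K g n m * xv K g n m j c ∈ paperIdeal K g n m hn := by
  have e : Xpow K g n m
        (fun j' c' => (dd n m c' - 1) + (if j' = j then (if c' = c then 1 else 0) else 0))
      = Xpow K g n m (fun _ c' => dd n m c' - 1)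
        * Xpow K g n m (fun j' c' => if j' = j then (if c' = c then 1 else 0) else 0) :=
    Xpow_add K g n m _ _
  rw [Xpow_single K g n m j c 1, pow_one] at e
  have e2 : SS K g n m = Xpow K g n m (fun _ c' => dd n m c' - 1) := rfl
  rw [← e2] at e
  rw [← e]
  refine Xpow_mono_mem K g n m (lemL K g n m hg hn hm2 hm1 c.val c.isLt j) ?_
  intro j' c'
  unfold SXexp
  have hdd := dd_ge n m c'
  simp only [Fin.ext_iff]
  split_ifs <;> omega

lemma SmulY (hg : 2 ≤ g) (hn : 0 < n)
    (hm2 : ∀ i : Fin n, i.val + 2 < n → 2 ≤ m i)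
    (hm1 : ∀ i : Fin n, i.val + 2 = n → 1 ≤ m i)
    (B : {A : Fin g → Fin n → ℕ // A ∈ 𝒜 g n m n}) :
    SS K g n m * yv K g n m B ∈ paperIdeal K g n m hn := by
  have hL' : ∀ k' : ℕ, k' < n → ∀ j',
      Xpow K g n m (SXexp g n m k' j') ∈ paperIdeal K g n m hn :=
    fun k' hk' j' => lemL K g n m hg hn hm2 hm1 k' hk' j'
  have hPle : ∀ (j' : Fin g) (c : Fin n), c.val < n → B.1 j' c + 1 ≤ dd n m c := by
    intro j' c _
    have h1 := A_bound g n m B.2 (c := c) c.isLt j'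
    have h2 := MM_le n m c
    have h3 := dd_ge n m c
    omega
  have hPsum : ∀ c : Fin n, c.val < n → ∑ j', B.1 j' c = m c :=
    fun c _ => A_sum g n m B.2 c.isLt
  have hother : ∀ p ∈ SIdx g n m,
      Wterm K g n m n B.1 (Et g n m p.1.val p.2.1 p.2.2) ∈ paperIdeal K g n m hn := by
    intro p hp
    obtain ⟨kf, C, j''⟩ := p
    rw [SIdx, Finset.mem_sigma] at hp
    have hC : C ∈ 𝒜 g n m kf.val := (Finset.mem_product.mp hp.2).1
    refine xterm_mem K g n m hn n B.1 hPle hPsum hL' kf C hC j'' ?_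
    have hkfn : kf.val + 1 < n := by have := kf.isLt; omega
    refine ⟨⟨kf.val + 1, hkfn⟩, (show kf.val + 1 < n from hkfn), ?_⟩
    by_contra hcon
    push_neg at hcon
    have hEsum : ∑ j', Et g n m kf.val C j'' j' ⟨kf.val + 1, hkfn⟩
        = ∑ j', B.1 j' ⟨kf.val + 1, hkfn⟩ :=
      Finset.sum_congr rfl fun j' _ => hcon j'
    rw [Et_colsum, if_neg (show ¬(kf.val + 1 = kf.val) by omega),
      if_pos (show kf.val + 1 = kf.val + 1 from rfl)] at hEsum
    have h0 : ∑ j', C j' (⟨kf.val + 1, hkfn⟩ : Fin n) = 0 :=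
      Finset.sum_eq_zero fun j' _ =>
        A_zero g n m hC (show kf.val ≤ kf.val + 1 by omega) j'
    have h1 := A_sum g n m B.2 (c := ⟨kf.val + 1, hkfn⟩) hkfn
    have := dd_ge n m ⟨kf.val + 1, hkfn⟩
    omega
  have hyother : ∀ B' ∈ (Finset.univ.erase B),
      Wterm K g n m n B.1 B'.1 * yv K g n m B' ∈ paperIdeal K g n m hn := by
    intro B' hB'
    have hne : B' ≠ B := (Finset.mem_erase.mp hB').1
    refine yterm_mem K g n m hn n B.1 hPle hPsum hL' B' ?_
    have hex : ∃ j' c, B'.1 j' c ≠ B.1 j' c := by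
      by_contra hcon; push_neg at hcon
      exact hne (Subtype.ext (funext fun j' => funext fun c => hcon j' c))
    obtain ⟨j', c, hnec⟩ := hex
    exact ⟨c, c.isLt, j', hnec⟩
  have htarget : Wterm K g n m n B.1 B.1 = SS K g n m := by
    refine Xpow_congr K g n m ?_
    intro j' c
    have h1 := A_bound g n m B.2 (c := c) c.isLt j'
    have h2 := MM_le n m c
    have h3 := dd_ge n m c
    rw [if_pos c.isLt]
    omega
  have hsplit : (∑ B' : {A : Fin g → Fin n → ℕ // A ∈ 𝒜 g n m n},
        Wterm K g n m n B.1 B'.1 * yv K g n m B')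
      = Wterm K g n m n B.1 B.1 * yv K g n m B
        + ∑ B' ∈ Finset.univ.erase B, Wterm K g n m n B.1 B'.1 * yv K g n m B' :=
    (Finset.add_sum_erase _ _ (Finset.mem_univ B)).symm
  have hff : ff K g n m ∈ paperIdeal K g n m hn :=
    Ideal.subset_span (Set.mem_union_right _ rfl)
  have heq2 : SS K g n m * yv K g n m B
      = Wmul K g n m n B.1 * ff K g n m
        - (∑ p ∈ SIdx g n m, Wterm K g n m n B.1 (Et g n m p.1.val p.2.1 p.2.2))
        - (∑ B' ∈ Finset.univ.erase B, Wterm K g n m n B.1 B'.1 * yv K g n m B') := by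
    rw [expandW K g n m n B.1, hsplit, htarget]
    ring
  rw [heq2]
  exact Ideal.sub_mem _
    (Ideal.sub_mem _ (Ideal.mul_mem_left _ _ hff) (Ideal.sum_mem _ hother))
    (Ideal.sum_mem _ hyother)

/- ====== S is not in I : monomial ideal argument ====== -/

instance fintypeVar : Fintype (Var g n m) :=
  inferInstanceAs (Fintype ((Fin g × Fin n) ⊕ {A : Fin g → Fin n → ℕ // A ∈ 𝒜 g n m n}))

/-- Exponent finsupp associated to a `g × n` exponent matrix (direct definition,
so that evaluation is definitional). -/
def toF (E : Fin g → Fin n → ℕ) : Var g n m →₀ ℕ :=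
  Finsupp.onFinset Finset.univ
    (fun v => Sum.elim (fun p => E p.1 p.2) (fun _ => 0) v)
    (fun v _ => Finset.mem_univ v)

/-- Exponent finsupp as a sum of singles. -/
def toFsum (E : Fin g → Fin n → ℕ) : Var g n m →₀ ℕ :=
  ∑ j : Fin g, ∑ c : Fin n, Finsupp.single (α := Var g n m) (Sum.inl (j, c)) (E j c)

lemma toFsum_apply_inl (E : Fin g → Fin n → ℕ) (j : Fin g) (c : Fin n) :
    toFsum g n m E (Sum.inl (j, c)) = E j c := by
  have hinj : ∀ (x : Fin g) (x1 : Fin n),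
      ((Sum.inl (x, x1) : Var g n m) = Sum.inl (j, c)) = (x = j ∧ x1 = c) := by
    intro x x1
    apply propext
    constructor
    · intro h
      have h2 : ((x, x1) : Fin g × Fin n) = (j, c) := Sum.inl.inj h
      exact ⟨congrArg Prod.fst h2, congrArg Prod.snd h2⟩
    · rintro ⟨rfl, rfl⟩; rfl
  unfold toFsum
  change (∑ j' : Fin g, ∑ i : Fin n, Finsupp.single (α := ((Fin g × Fin n) ⊕ {A : Fin g → Fin n → ℕ // A ∈ 𝒜 g n m n})) (Sum.inl (j', i)) (E j' i))
    (Sum.inl (j, c)) = E j c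
  erw [Finsupp.finset_sum_apply]
  erw [Finset.sum_congr rfl fun j' _ => Finsupp.finset_sum_apply _ _ _]
  simp only [Finsupp.single_apply, hinj, Sum.inl.injEq, Prod.mk.injEq]
  have h1 : ∀ x : Fin g, (∑ x1 : Fin n, if x = j ∧ x1 = c then E x x1 else 0)
      = if x = j then E x c else 0 := by
    intro x
    by_cases hx : x = j <;> simp [hx]
  rw [Finset.sum_congr rfl fun x _ => h1 x,
    Finset.sum_ite_eq' Finset.univ j (fun x => E x c)]
  simp

lemma toFsum_apply_inr (E : Fin g → Fin n → ℕ)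
    (B : {A : Fin g → Fin n → ℕ // A ∈ 𝒜 g n m n}) :
    toFsum g n m E (Sum.inr B) = 0 := by
  have hinj : ∀ (x : Fin g) (x1 : Fin n),
      ((Sum.inl (x, x1) : Var g n m) = Sum.inr B) = False := by
    intro x x1
    apply propext
    exact ⟨fun h => Sum.inl_ne_inr h, False.elim⟩
  unfold toFsum
  change (∑ j' : Fin g, ∑ i : Fin n, Finsupp.single (α := ((Fin g × Fin n) ⊕ {A : Fin g → Fin n → ℕ // A ∈ 𝒜 g n m n})) (Sum.inl (j', i)) (E j' i))
    (Sum.inr B) = 0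
  erw [Finsupp.finset_sum_apply]
  erw [Finset.sum_congr rfl fun j' _ => Finsupp.finset_sum_apply _ _ _]
  simp only [Finsupp.single_apply, hinj, reduceCtorEq, if_false]
  simp

lemma toF_eq_sum (E : Fin g → Fin n → ℕ) : toF g n m E = toFsum g n m E := by
  apply Finsupp.ext
  intro v
  rcases v with ⟨j, c⟩ | B
  · exact (toFsum_apply_inl g n m E j c).symm
  · exact (toFsum_apply_inr g n m E B).symm

lemma prod_monomial_one {ι : Type} (s : Finset ι) (t : ι → (Var g n m →₀ ℕ)) :
    (∏ i ∈ s, (monomial (t i) (1 : K))) = monomial (∑ i ∈ s, t i) 1 := by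
  induction s using Finset.cons_induction with
  | empty => simp
  | cons a s ha ih => rw [Finset.prod_cons, ih, monomial_mul, one_mul, Finset.sum_cons]

lemma Xpow_eq_monomial (E : Fin g → Fin n → ℕ) :
    Xpow K g n m E = monomial (toF g n m E) 1 := by
  rw [toF_eq_sum]
  unfold Xpow toFsum
  calc ∏ j : Fin g, ∏ c : Fin n, xv K g n m j c ^ E j c
      = ∏ j : Fin g, ∏ c : Fin n,
          monomial (Finsupp.single (α := Var g n m) (Sum.inl (j, c)) (E j c)) (1 : K) := by
        refine Finset.prod_congr rfl fun j _ => Finset.prod_congr rfl fun c _ => ?_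
        rw [xv]
        exact X_pow_eq_monomial
    _ = ∏ j : Fin g, monomial
          (∑ c : Fin n, Finsupp.single (α := Var g n m) (Sum.inl (j, c)) (E j c)) (1 : K) :=
        Finset.prod_congr rfl fun j _ => prod_monomial_one K g n m _ _
    _ = monomial (∑ j : Fin g, ∑ c : Fin n,
          Finsupp.single (α := Var g n m) (Sum.inl (j, c)) (E j c)) (1 : K) :=
        prod_monomial_one K g n m _ _

lemma yv_eq_monomial (B : {A : Fin g → Fin n → ℕ // A ∈ 𝒜 g n m n}) :
    yv K g n m B = monomial (Finsupp.single (α := Var g n m) (Sum.inr B) 1) 1 := by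
  erw [yv, ← pow_one (X (σ := Var g n m) (Sum.inr B)), X_pow_eq_monomial]

/-- The set of exponents of the monomials appearing in the generators of `I`. -/
def Tset (hn : 0 < n) : Set (Var g n m →₀ ℕ) :=
  {σ | (∃ j : Fin g,
        σ = Finsupp.single (Sum.inl (j, (⟨0, hn⟩ : Fin n)) : Var g n m) (dd n m ⟨0, hn⟩))
    ∨ (∃ p ∈ SIdx g n m, σ = toF g n m (Et g n m p.1.val p.2.1 p.2.2))
    ∨ (∃ B : {A : Fin g → Fin n → ℕ // A ∈ 𝒜 g n m n},
        σ = toF g n m B.1 + (Finsupp.single (Sum.inr B) 1 : Var g n m →₀ ℕ))}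

lemma SS_not_mem (hn : 0 < n) : SS K g n m ∉ paperIdeal K g n m hn := by
  intro hmem
  have hsub : paperIdeal K g n m hn
      ≤ Ideal.span ((fun s => monomial s (1 : K)) '' Tset g n m hn) := by
    rw [paperIdeal, Ideal.span_le]
    rintro x (⟨j, rfl⟩ | rfl)
    · exact Ideal.subset_span
        ⟨Finsupp.single (Sum.inl (j, (⟨0, hn⟩ : Fin n)) : Var g n m) (dd n m ⟨0, hn⟩),
          Or.inl ⟨j, rfl⟩, (X_pow_eq_monomial).symm⟩
    · unfold ff
      refine Ideal.add_mem _
        (Ideal.sum_mem _ fun kf _ => Ideal.sum_mem _ fun C hC =>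
          Ideal.sum_mem _ fun j'' _ => ?_)
        (Ideal.sum_mem _ fun B _ => ?_)
      · have hkfn : kf.val + 1 < n := by have := kf.isLt; omega
        rw [← term_eq K g n m kf.val hkfn C j'', Xpow_eq_monomial]
        refine Ideal.subset_span ⟨toF g n m (Et g n m kf.val C j''), ?_, rfl⟩
        refine Or.inr (Or.inl ⟨⟨kf, (C, j'')⟩, ?_, rfl⟩)
        rw [SIdx, Finset.mem_sigma]
        exact ⟨Finset.mem_univ _, Finset.mem_product.mpr ⟨hC, Finset.mem_univ _⟩⟩
      · rw [Xpow_eq_monomial, yv_eq_monomial]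
        show (monomial (toF g n m B.1) (1 : K))
            * (monomial (Finsupp.single (α := Var g n m) (Sum.inr B) 1) (1 : K))
          ∈ Ideal.span ((fun s => monomial s (1 : K)) '' Tset g n m hn)
        rw [monomial_mul, one_mul]
        exact Ideal.subset_span
          ⟨toF g n m B.1 + (Finsupp.single (Sum.inr B) 1 : Var g n m →₀ ℕ),
            Or.inr (Or.inr ⟨B, rfl⟩), rfl⟩
  have hS : SS K g n m
      ∈ Ideal.span ((fun s => monomial s (1 : K)) '' Tset g n m hn) := hsub hmem
  rw [show SS K g n m = monomial (toF g n m (fun _ c => dd n m c - 1)) (1 : K) from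
    Xpow_eq_monomial K g n m _] at hS
  rw [mem_ideal_span_monomial_image] at hS
  have hsup : (toF g n m (fun _ c => dd n m c - 1))
      ∈ (monomial (toF g n m (fun _ c => dd n m c - 1)) (1 : K)).support := by
    rw [support_monomial, if_neg one_ne_zero]
    exact Finset.mem_singleton_self _
  obtain ⟨σ, hσT, hσle⟩ := hS _ hsup
  rcases hσT with ⟨j, rfl⟩ | ⟨p, hp, rfl⟩ | ⟨B, rfl⟩
  · have h := Finsupp.le_def.mp hσle (Sum.inl (j, (⟨0, hn⟩ : Fin n)))
    rw [Finsupp.single_eq_same] at h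
    have hc : ¬ (dd n m (⟨0, hn⟩ : Fin n) ≤ dd n m (⟨0, hn⟩ : Fin n) - 1) := by
      have := dd_ge n m (⟨0, hn⟩ : Fin n)
      omega
    exact hc h
  · obtain ⟨kf, C, j''⟩ := p
    rw [SIdx, Finset.mem_sigma] at hp
    have hC : C ∈ 𝒜 g n m kf.val := (Finset.mem_product.mp hp.2).1
    have hkfn : kf.val + 1 < n := by have := kf.isLt; omega
    have h := Finsupp.le_def.mp hσle (Sum.inl (j'', (⟨kf.val + 1, hkfn⟩ : Fin n)))
    have hc : ¬ (Et g n m kf.val C j'' j'' (⟨kf.val + 1, hkfn⟩ : Fin n)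
        ≤ dd n m (⟨kf.val + 1, hkfn⟩ : Fin n) - 1) := by
      unfold Et
      rw [A_zero g n m hC (show kf.val ≤ kf.val + 1 by omega) j'']
      have hdd := dd_ge n m (⟨kf.val + 1, hkfn⟩ : Fin n)
      have hv : ((⟨kf.val + 1, hkfn⟩ : Fin n)).val = kf.val + 1 := rfl
      split_ifs <;> first | omega | simp_all
    exact hc h
  · have h := Finsupp.le_def.mp hσle (Sum.inr B)
    erw [Finsupp.add_apply, Finsupp.single_eq_same] at h
    have hc : ¬ ((0 : ℕ) + 1 ≤ (0 : ℕ)) := by omega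
    exact hc h


/-- Theorem: `depth (R/I) = 0`.  With `I = I_{g,(m_1,…,m_n)}`,
`𝔪` the graded maximal ideal of `R` (generated by all variables) and
`S = ∏_{j,k} x_{j,k}^{d_k - 1}`, we have `S ∉ I` and `S·𝔪 ⊆ I`, i.e.
`S ∈ (I : 𝔪) \ I`; hence the image of `S` is a nonzero socle element of `R/I`. -/
theorem statement1 (hg : 2 ≤ g) (hn : 0 < n)
    (hm2 : ∀ i : Fin n, i.val + 2 < n → 2 ≤ m i)
    (hm1 : ∀ i : Fin n, i.val + 2 = n → 1 ≤ m i) :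
    SS K g n m ∉ paperIdeal K g n m hn ∧
    SS K g n m ∈
      (paperIdeal K g n m hn).colon
        (Ideal.span (Set.range (X : Var g n m → MvPolynomial (Var g n m) K))) := by
  constructor
  · exact SS_not_mem K g n m hn
  · rw [Submodule.mem_colon]
    intro p hp
    refine Submodule.span_induction ?_ ?_ ?_ ?_ hp
    · rintro x ⟨v, rfl⟩
      rcases v with ⟨j, c⟩ | B
      · exact SmulX K g n m hg hn hm2 hm1 j c
      · exact SmulY K g n m hg hn hm2 hm1 B
    · rw [smul_zero]; exact Ideal.zero_mem _
    · intro x y _ _ hx hy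
      rw [smul_add]; exact Ideal.add_mem _ hx hy
    · intro a x _ hx
      rw [smul_comm]
      exact Ideal.mul_mem_left _ _ hx


end Paper
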